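/- The word problem of the free group of rank 2 is not a counter language: letting F₂ be the free group on generators a, b, the set of all words over the alphabet {a, a⁻¹, b, b⁻¹} that evaluate to the identity element of F₂ is not k-counter for any k ≥ 1. -/

import Mathlib

/-- A `ℤ^k`-automaton over alphabet `A`: a finite directed graph with states
`Fin n`, a start state, accept states, and finitely many edges labelled by
pairs `(x, g)` with `x ∈ A ∪ {ε}` (modelled as `Option A`) and `g ∈ ℤ^k`. -/
structure ZkAut (A : Type) (k : ℕ) where
  n : ℕ
  start : Fin n
  accept : Fin n → Prop
  edges : List (Fin n × (Option A × (Fin k → ℤ)) × Fin n)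

/-- `M.Path p q w g` : there is a directed path from `p` to `q` whose edge
labels read the word `w` and sum to `g` in `ℤ^k`. -/
inductive ZkAut.Path {A : Type} {k : ℕ} (M : ZkAut A k) :
    Fin M.n → Fin M.n → List A → (Fin k → ℤ) → Prop
  | nil (q : Fin M.n) : ZkAut.Path M q q [] 0
  | cons {p q r : Fin M.n} {x : Option A} {g : Fin k → ℤ} {w : List A} {h : Fin k → ℤ} :
      (p, (x, g), q) ∈ M.edges → ZkAut.Path M q r w h →
      ZkAut.Path M p r (x.toList ++ w) (g + h)

/-- The automaton accepts `w` if some path from the start state to an accept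
state reads `w` with total counter value `0 ∈ ℤ^k`. -/
def ZkAut.Accepts {A : Type} {k : ℕ} (M : ZkAut A k) (w : List A) : Prop :=
  ∃ q : Fin M.n, M.accept q ∧ M.Path M.start q w 0

/-- A language is `k`-counter if it is the set of words accepted by some
`ℤ^k`-automaton. -/
def IsCounterLang {A : Type} (k : ℕ) (L : Language A) : Prop :=
  ∃ M : ZkAut A k, ∀ w : List A, w ∈ L ↔ M.Accepts w

/-- A letter of the alphabet {a, a⁻¹, b, b⁻¹} for the free group `F₂`:
`(i, false)` is the `i`-th generator, `(i, true)` its inverse. -/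
abbrev F2Letter : Type := Fin 2 × Bool

/-- Evaluation of a letter in the free group on two generators. -/
def evalF2Letter : F2Letter → FreeGroup (Fin 2)
  | (i, false) => FreeGroup.of i
  | (i, true) => (FreeGroup.of i)⁻¹

/-- Evaluation of a word over {a, a⁻¹, b, b⁻¹} in the free group `F₂`. -/
def evalF2Word (w : List F2Letter) : FreeGroup (Fin 2) :=
  (w.map evalF2Letter).prod

namespace ZkAut
variable {A : Type} {k : ℕ} {M : ZkAut A k}

theorem Path.append' {p q r : Fin M.n} {u v : List A} {g h : Fin k → ℤ}
    (h1 : M.Path p q u g) (h2 : M.Path q r v h) : M.Path p r (u ++ v) (g + h) := by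
  induction h1 with
  | nil q => simpa using h2
  | @cons p' q' r' x gx w hw e _ ih =>
      have := ZkAut.Path.cons e (ih h2)
      simpa [List.append_assoc, add_assoc] using this

theorem Path.split' {p r : Fin M.n} {w : List A} {G : Fin k → ℤ}
    (hp : M.Path p r w G) : ∀ u v : List A, w = u ++ v →
    ∃ (q : Fin M.n) (g₁ g₂ : Fin k → ℤ), G = g₁ + g₂ ∧ M.Path p q u g₁ ∧ M.Path q r v g₂ := by
  induction hp with
  | nil q =>
      intro u v huv
      have h : u = [] ∧ v = [] := by
        have := huv.symm
        simpa [List.append_eq_nil_iff] using this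
      rcases h with ⟨hu, hv⟩; subst hu; subst hv
      exact ⟨q, 0, 0, by simp, ZkAut.Path.nil q, ZkAut.Path.nil q⟩
  | @cons p' q' r' x gx w' hw e hpath ih =>
      intro u v huv
      cases u with
      | nil =>
          refine ⟨p', 0, gx + hw, by simp, ZkAut.Path.nil p', ?_⟩
          have hv : v = x.toList ++ w' := by simpa using huv.symm
          rw [hv]
          exact ZkAut.Path.cons e hpath
      | cons y u' =>
          cases x with
          | none =>
              have hw' : w' = (y :: u') ++ v := by simpa using huv
              obtain ⟨m, g₁, g₂, hsum, h1, h2⟩ := ih (y :: u') v hw'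
              refine ⟨m, gx + g₁, g₂, by rw [hsum, add_assoc], ?_, h2⟩
              have := ZkAut.Path.cons e h1
              simpa using this
          | some c =>
              have hinj : c :: w' = y :: (u' ++ v) := by simpa using huv
              have hc : c = y := by injection hinj
              have hw2 : w' = u' ++ v := by injection hinj
              obtain ⟨m, g₁, g₂, hsum, h1, h2⟩ := ih u' v hw2
              refine ⟨m, gx + g₁, g₂, by rw [hsum, add_assoc], ?_, h2⟩
              have := ZkAut.Path.cons e h1
              rw [hc] at this
              simpa using this

end ZkAut

namespace FGWP

def fgA : FreeGroup (Fin 2) := FreeGroup.of 0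
def fgB : FreeGroup (Fin 2) := FreeGroup.of 1
def xg (i : ℕ) : FreeGroup (Fin 2) := fgA ^ i * fgB * (fgA ^ i)⁻¹

def waP (n : ℕ) : List F2Letter := List.replicate n ((0 : Fin 2), false)
def waN (n : ℕ) : List F2Letter := List.replicate n ((0 : Fin 2), true)
def xw (i : ℕ) : List F2Letter := waP i ++ [((1 : Fin 2), false)] ++ waN i
def xwI (i : ℕ) : List F2Letter := waP i ++ [((1 : Fin 2), true)] ++ waN i

lemma evalF2Word_append (u v : List F2Letter) :
    evalF2Word (u ++ v) = evalF2Word u * evalF2Word v := by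
  simp [evalF2Word]

lemma eval_waP (n : ℕ) : evalF2Word (waP n) = fgA ^ n := by
  simp [evalF2Word, waP, evalF2Letter, fgA, List.map_replicate, List.prod_replicate]

lemma eval_waN (n : ℕ) : evalF2Word (waN n) = (fgA ^ n)⁻¹ := by
  simp [evalF2Word, waN, evalF2Letter, fgA, List.map_replicate, List.prod_replicate, inv_pow]

lemma eval_single_b : evalF2Word [((1 : Fin 2), false)] = fgB := by
  simp [evalF2Word, evalF2Letter, fgB]

lemma eval_single_bI : evalF2Word [((1 : Fin 2), true)] = fgB⁻¹ := by
  simp [evalF2Word, evalF2Letter, fgB]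

lemma eval_xw (i : ℕ) : evalF2Word (xw i) = xg i := by
  rw [xw, evalF2Word_append, evalF2Word_append, eval_waP, eval_waN, eval_single_b, xg]

lemma eval_xwI (i : ℕ) : evalF2Word (xwI i) = (xg i)⁻¹ := by
  have h : evalF2Word (xwI i) = fgA ^ i * fgB⁻¹ * (fgA ^ i)⁻¹ := by
    rw [xwI, evalF2Word_append, evalF2Word_append, eval_waP, eval_waN, eval_single_bI]
  rw [h, xg]
  group

def segw (j : ℕ) : List F2Letter := xwI j ++ xw (j + 1)

def chainW : ℕ → ℕ → List F2Letter
  | t, 0 => xwI t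
  | t, r + 1 => segw t ++ chainW (t + 1) r

def mcat (s : ℕ) : ℕ → List F2Letter
  | 0 => []
  | j + 1 => mcat s j ++ segw (s + j)

lemma eval_segw (j : ℕ) : evalF2Word (segw j) = (xg j)⁻¹ * xg (j + 1) := by
  simp [segw, evalF2Word_append, eval_xw, eval_xwI]

lemma eval_chainW : ∀ r t, evalF2Word (chainW t r) = (xg t)⁻¹
  | 0, t => eval_xwI t
  | r + 1, t => by
      simp [chainW, evalF2Word_append, eval_segw, eval_chainW r (t + 1), mul_assoc]

lemma eval_mcat (s : ℕ) : ∀ c, evalF2Word (mcat s c) = (xg s)⁻¹ * xg (s + c)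
  | 0 => by simp [mcat, evalF2Word]
  | c + 1 => by
      simp [mcat, evalF2Word_append, eval_segw, eval_mcat s c, mul_assoc,
        ← Nat.add_assoc]

end FGWP


section KeyGroup
lemma key_group {G : Type*} [Group G] (a b : G) (s d e : ℕ) :
    (a ^ s * b * (a ^ s)⁻¹) * (a ^ (s+d) * b * (a ^ (s+d))⁻¹)⁻¹ * (a ^ (s+d+e) * b * (a ^ (s+d+e))⁻¹) *
      (a ^ s * b * (a ^ s)⁻¹)⁻¹ * (a ^ (s+d) * b * (a ^ (s+d))⁻¹) * (a ^ (s+d+e) * b * (a ^ (s+d+e))⁻¹)⁻¹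
    = a ^ s * b * a ^ d * b⁻¹ * a ^ e * b * (a ^ (d+e))⁻¹ * b⁻¹ * a ^ d * b * a ^ e * b⁻¹ * (a ^ (s+d+e))⁻¹ := by
  simp only [pow_add]
  group
end KeyGroup

namespace FGWP

abbrev lA : Fin 2 × Bool := ((0 : Fin 2), true)
abbrev lA' : Fin 2 × Bool := ((0 : Fin 2), false)
abbrev lB : Fin 2 × Bool := ((1 : Fin 2), true)
abbrev lB' : Fin 2 × Bool := ((1 : Fin 2), false)

abbrev Rr : (Fin 2 × Bool) → (Fin 2 × Bool) → Prop := fun x y => ¬(x.1 = y.1 ∧ x.2 = !y.2)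

def LL (s p q r : ℕ) : List (Fin 2 × Bool) :=
  List.replicate s lA ++ (lB :: (List.replicate p lA ++ (lB' :: (List.replicate q lA ++
    (lB :: (List.replicate r lA' ++ (lB' :: (List.replicate p lA ++ (lB :: (List.replicate q lA ++
      (lB' :: List.replicate (s + r) lA')))))))))))

lemma mk_pow (i : Fin 2) (n : ℕ) :
    (FreeGroup.of i) ^ n = FreeGroup.mk (List.replicate n (i, true)) := by
  induction n with
  | zero => rfl
  | succ m ih =>
      rw [pow_succ, ih]
      show _ * FreeGroup.mk [(i, true)] = _
      rw [FreeGroup.mul_mk, ← List.replicate_succ']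

lemma mk_pow_inv (i : Fin 2) (n : ℕ) :
    ((FreeGroup.of i) ^ n)⁻¹ = FreeGroup.mk (List.replicate n (i, false)) := by
  rw [mk_pow, FreeGroup.inv_mk]
  congr 1
  simp [FreeGroup.invRev, List.map_replicate, List.reverse_replicate]


lemma X_eq_mk (s d e : ℕ) :
    xg s * (xg (s+d))⁻¹ * xg (s+d+e) * (xg s)⁻¹ * xg (s+d) * (xg (s+d+e))⁻¹ =
      FreeGroup.mk (LL s d e (d+e)) := by
  rw [xg, xg, xg, key_group]
  have h1 : fgB = FreeGroup.mk [lB] := rfl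
  have h2 : fgB⁻¹ = FreeGroup.mk [lB'] := by
    rw [h1, FreeGroup.inv_mk]; rfl
  have h3 : s + d + e = s + (d + e) := Nat.add_assoc s d e
  rw [h3, h1, h2] at *
  rw [fgA, mk_pow, mk_pow, mk_pow, mk_pow_inv, mk_pow_inv]
  simp only [FreeGroup.mul_mk]
  congr 1
  simp [LL, List.append_assoc]

end FGWP


namespace FGWP

lemma mem_head?_replicate {c y : Fin 2 × Bool} {n : ℕ}
    (h : y ∈ (List.replicate n c).head?) : y = c := by
  cases n with
  | zero => simp at h
  | succ m => rw [List.replicate_succ, List.head?_cons] at h; simpa using h.symm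

lemma head_cond_succ {z c : Fin 2 × Bool} {l : List (Fin 2 × Bool)} (hzc : Rr z c) (m : ℕ) :
    ∀ y ∈ (List.replicate (m+1) c ++ l).head?, Rr z y := by
  rw [List.replicate_succ, List.cons_append, List.head?_cons]
  intro y hy
  simp only [Option.mem_some_iff] at hy
  subst hy; exact hzc

lemma chain_rep_prefix {c : Fin 2 × Bool} {l : List (Fin 2 × Bool)} (hcc : Rr c c)
    (hcy : ∀ y ∈ l.head?, Rr c y) (hl : List.Chain' Rr l) :
    ∀ n, List.Chain' Rr (List.replicate n c ++ l)
  | 0 => by simpa using hl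
  | n+1 => by
      rw [List.replicate_succ, List.cons_append]
      refine List.isChain_cons.mpr ⟨?_, chain_rep_prefix hcc hcy hl n⟩
      intro y hy
      cases n with
      | zero =>
          simp only [List.replicate, List.nil_append] at hy
          exact hcy y hy
      | succ m =>
          rw [List.replicate_succ, List.cons_append, List.head?_cons] at hy
          simp only [Option.mem_some_iff] at hy
          subst hy; exact hcc

lemma head_cons {z x : Fin 2 × Bool} {l : List (Fin 2 × Bool)} (hzx : Rr z x) :
    ∀ y ∈ (x :: l).head?, Rr z y := by
  intro y hy
  simp only [List.head?_cons, Option.mem_some_iff] at hy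
  subst hy; exact hzx

lemma chain_LL (s p0 q0 r0 : ℕ) : List.Chain' Rr (LL s (p0+1) (q0+1) (r0+1)) := by
  have hAA : Rr lA lA := by decide
  have hA'A' : Rr lA' lA' := by decide
  have t0 : List.Chain' Rr (List.replicate (s + (r0+1)) lA') :=
    List.isChain_replicate_of_rel _ hA'A'
  have t1 : List.Chain' Rr (lB' :: List.replicate (s + (r0+1)) lA') :=
    List.isChain_cons.mpr ⟨fun y hy => by rw [mem_head?_replicate hy]; decide, t0⟩
  have t2 := chain_rep_prefix hAA (head_cons (by decide)) t1 (q0+1)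
  have t3 : List.Chain' Rr (lB :: (List.replicate (q0+1) lA ++ _)) :=
    List.isChain_cons.mpr ⟨head_cond_succ (by decide) q0, t2⟩
  have t4 := chain_rep_prefix hAA (head_cons (by decide)) t3 (p0+1)
  have t5 : List.Chain' Rr (lB' :: (List.replicate (p0+1) lA ++ _)) :=
    List.isChain_cons.mpr ⟨head_cond_succ (by decide) p0, t4⟩
  have t6 := chain_rep_prefix hA'A' (head_cons (by decide)) t5 (r0+1)
  have t7 : List.Chain' Rr (lB :: (List.replicate (r0+1) lA' ++ _)) :=
    List.isChain_cons.mpr ⟨head_cond_succ (by decide) r0, t6⟩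
  have t8 := chain_rep_prefix hAA (head_cons (by decide)) t7 (q0+1)
  have t9 : List.Chain' Rr (lB' :: (List.replicate (q0+1) lA ++ _)) :=
    List.isChain_cons.mpr ⟨head_cond_succ (by decide) q0, t8⟩
  have t10 := chain_rep_prefix hAA (head_cons (by decide)) t9 (p0+1)
  have t11 : List.Chain' Rr (lB :: (List.replicate (p0+1) lA ++ _)) :=
    List.isChain_cons.mpr ⟨head_cond_succ (by decide) p0, t10⟩
  exact chain_rep_prefix hAA (head_cons (by decide)) t11 s

lemma reduce_chain : ∀ L : List (Fin 2 × Bool), List.Chain' Rr L → FreeGroup.reduce L = L := by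
  intro L
  induction L with
  | nil => intro _; rfl
  | cons x l ih =>
      intro h
      have ht := ih h.tail
      rw [FreeGroup.reduce.cons, ht]
      cases l with
      | nil => rfl
      | cons y l' =>
          have hr : ¬(x.1 = y.1 ∧ x.2 = !y.2) := (List.isChain_cons_cons.mp h).1
          show (if x.1 = y.1 ∧ x.2 = !y.2 then l' else x :: y :: l') = x :: y :: l'
          rw [if_neg hr]

lemma xg_ne (s t u : ℕ) (h1 : s < t) (h2 : t < u) :
    xg s * (xg t)⁻¹ * xg u * (xg s)⁻¹ * xg t * (xg u)⁻¹ ≠ 1 := by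
  obtain ⟨d0, hd⟩ : ∃ d0, t = s + (d0 + 1) := ⟨t - s - 1, by omega⟩
  obtain ⟨e0, he⟩ : ∃ e0, u = t + (e0 + 1) := ⟨u - t - 1, by omega⟩
  subst hd; subst he
  intro hX
  rw [show s + (d0+1) + (e0+1) = s + (d0+1) + (e0+1) from rfl] at hX
  rw [X_eq_mk s (d0+1) (e0+1)] at hX
  have h0 := congrArg FreeGroup.toWord hX
  rw [FreeGroup.toWord_mk, FreeGroup.toWord_one] at h0
  rw [show (d0+1) + (e0+1) = (d0+e0+1) + 1 by omega] at h0
  rw [reduce_chain _ (chain_LL s d0 e0 (d0+e0+1))] at h0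
  have hne : LL s (d0+1) (e0+1) (d0+e0+1+1) ≠ [] := by simp [LL]
  exact hne h0

end FGWP


namespace FGWP

variable {k : ℕ} {M : ZkAut F2Letter k}

lemma extract : ∀ (r t : ℕ) (p f : Fin M.n) (G : Fin k → ℤ),
    M.Path p f (chainW t r) G →
    ∃ (q : ℕ → Fin M.n) (g : ℕ → Fin k → ℤ), q t = p ∧ g t = -G ∧
      (∀ j, t ≤ j → j < t + r → M.Path (q j) (q (j+1)) (segw j) (g (j+1) - g j)) ∧
      M.Path (q (t+r)) f (xwI (t+r)) (-(g (t+r)))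
  | 0, t, p, f, G, hp => by
      refine ⟨fun _ => p, fun _ => -G, rfl, rfl, ?_, ?_⟩
      · intro j hj1 hj2; omega
      · simpa [chainW] using hp
  | r+1, t, p, f, G, hp => by
      rw [show chainW t (r+1) = segw t ++ chainW (t+1) r from rfl] at hp
      obtain ⟨p', G₁, G₂, hG, hp1, hp2⟩ := hp.split' (segw t) (chainW (t+1) r) rfl
      obtain ⟨q', g', hq', hg', hseg', hlast'⟩ := extract r (t+1) p' f G₂ hp2
      refine ⟨Function.update q' t p, Function.update g' t (-G),
        by simp, by simp, ?_, ?_⟩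
      · intro j hj1 hj2
        rcases eq_or_lt_of_le hj1 with hjt | hjt
        · subst hjt
          simp only [Function.update_self,
            Function.update_of_ne (show t + 1 ≠ t by omega), hq', hg']
          have hsum : -G₂ - -G = G₁ := by rw [hG]; abel
          rw [hsum]; exact hp1
        · simp only [Function.update_of_ne (show j ≠ t by omega),
            Function.update_of_ne (show j + 1 ≠ t by omega)]
          exact hseg' j (by omega) (by omega)
      · simp only [Function.update_of_ne (show t + (r+1) ≠ t by omega)]
        rw [show t + (r + 1) = (t + 1) + r by omega]
        exact hlast'

lemma mcat_path {q : ℕ → Fin M.n} {g : ℕ → Fin k → ℤ} {m : ℕ}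
    (SEG : ∀ j, j < m → M.Path (q j) (q (j+1)) (segw j) (g (j+1) - g j)) :
    ∀ (s c : ℕ), s + c ≤ m → M.Path (q s) (q (s+c)) (mcat s c) (g (s+c) - g s)
  | s, 0, h => by
      have h0 : g (s + 0) - g s = (0 : Fin k → ℤ) := by simp
      rw [show mcat s 0 = [] from rfl, h0]
      exact ZkAut.Path.nil (q s)
  | s, c+1, h => by
      have hp := (mcat_path SEG s c (by omega)).append' (SEG (s+c) (by omega))
      have hw : mcat s c ++ segw (s + c) = mcat s (c+1) := rfl
      have hsum : (g (s+c) - g s) + (g (s+c+1) - g (s+c)) = g (s+(c+1)) - g s := by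
        rw [show s + (c+1) = s + c + 1 from rfl]; abel
      rw [hw, hsum] at hp
      exact hp

end FGWP


namespace FGWP

lemma three_sorted {P : ℕ → Prop} {a b c : ℕ} (ha : P a) (hb : P b) (hc : P c)
    (hab : a ≠ b) (hac : a ≠ c) (hbc : b ≠ c) :
    ∃ s t u, s < t ∧ t < u ∧ P s ∧ P t ∧ P u := by
  rcases Nat.lt_trichotomy a b with h | h | h
  · rcases Nat.lt_trichotomy b c with h' | h' | h'
    · exact ⟨a, b, c, h, h', ha, hb, hc⟩
    · exact absurd h' hbc
    · rcases Nat.lt_trichotomy a c with h'' | h'' | h''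
      · exact ⟨a, c, b, h'', h', ha, hc, hb⟩
      · exact absurd h'' hac
      · exact ⟨c, a, b, h'', h, hc, ha, hb⟩
  · exact absurd h hab
  · rcases Nat.lt_trichotomy a c with h' | h' | h'
    · exact ⟨b, a, c, h, h', hb, ha, hc⟩
    · exact absurd h' hac
    · rcases Nat.lt_trichotomy b c with h'' | h'' | h''
      · exact ⟨b, c, a, h'', h', hb, hc, ha⟩
      · exact absurd h'' hbc
      · exact ⟨c, b, a, h'', h, hc, hb, ha⟩

end FGWP

open FGWP

/-- The word problem of the free group of rank 2 — the set of words over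
{a, a⁻¹, b, b⁻¹} evaluating to the identity — is not `k`-counter for any
`k ≥ 1`. -/
theorem free_group_word_problem_not_counter :
    ∀ k : ℕ, 1 ≤ k →
      ¬ IsCounterLang k {w : List F2Letter | evalF2Word w = 1} := by

  intro k _ hL
  obtain ⟨M, hM⟩ := hL
  set N1 := 2 * M.n with hN1
  -- the word W is in the language
  have hW1 : evalF2Word (xw 0 ++ chainW 0 N1) = 1 := by
    rw [evalF2Word_append, eval_xw, eval_chainW]
    simp
  have haccW : M.Accepts (xw 0 ++ chainW 0 N1) := (hM _).1 hW1
  obtain ⟨f, hf, hpath⟩ := haccW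
  obtain ⟨p₀, G₀, G₁, hG01, hP0, hP1⟩ := hpath.split' (xw 0) (chainW 0 N1) rfl
  obtain ⟨q, g, hq0, hg0, hseg, hlast⟩ := extract N1 0 p₀ f G₁ hP1
  have SEG : ∀ j, j < N1 → M.Path (q j) (q (j+1)) (segw j) (g (j+1) - g j) :=
    fun j hj => hseg j (Nat.zero_le _) (by omega)
  have hlastN : M.Path (q N1) f (xwI N1) (-(g N1)) := by
    have h0 : (0 : ℕ) + N1 = N1 := by omega
    rw [h0] at hlast; exact hlast
  -- pigeonhole: three indices ≤ N1 with the same state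
  have hmaps : ∀ a ∈ Finset.range (N1+1), q a ∈ (Finset.univ : Finset (Fin M.n)) :=
    fun a _ => Finset.mem_univ _
  have hcard : (Finset.univ : Finset (Fin M.n)).card * 2 < (Finset.range (N1+1)).card := by
    rw [Finset.card_univ, Fintype.card_fin, Finset.card_range]
    omega
  obtain ⟨y, -, hy⟩ :=
    Finset.exists_lt_card_fiber_of_mul_lt_card_of_maps_to hmaps hcard
  rw [Finset.two_lt_card] at hy
  obtain ⟨a, ha, b, hb, c, hc, hab, hac, hbc⟩ := hy
  obtain ⟨s, t, u, hst, htu, hs, ht, hu⟩ :=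
    three_sorted (P := fun x => x ∈ Finset.filter (fun x => q x = y) (Finset.range (N1+1)))
      ha hb hc hab hac hbc
  rw [Finset.mem_filter, Finset.mem_range] at hs ht hu
  have hsN : s ≤ N1 := by omega
  have htN : t ≤ N1 := by omega
  have huN : u ≤ N1 := by omega
  have hqs : q s = y := hs.2
  have hqt : q t = y := ht.2
  have hqu : q u = y := hu.2
  -- assemble the forbidden accepted word
  have hG0 : g 0 = G₀ := by
    rw [hg0]
    have : G₀ + G₁ = 0 := hG01.symm
    have := eq_neg_of_add_eq_zero_left this
    rw [this]
  have P1 : M.Path M.start (q 0) (xw 0) (g 0) := by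
    rw [hq0, hG0]; exact hP0
  have Phead : M.Path M.start (q s) (xw 0 ++ mcat 0 s) (g 0 + (g s - g 0)) := by
    have := P1.append' (mcat_path SEG 0 s (by omega))
    rw [show (0 : ℕ) + s = s by omega] at this
    exact this
  have P2 : M.Path (q t) (q u) (mcat t (u - t)) (g u - g t) := by
    have := mcat_path SEG t (u - t) (by omega)
    rw [show t + (u - t) = u by omega] at this
    exact this
  have P3 : M.Path (q s) (q t) (mcat s (t - s)) (g t - g s) := by
    have := mcat_path SEG s (t - s) (by omega)
    rw [show s + (t - s) = t by omega] at this
    exact this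
  have P4 : M.Path (q u) f (mcat u (N1 - u) ++ xwI N1) ((g N1 - g u) + -(g N1)) := by
    have h4 := mcat_path SEG u (N1 - u) (by omega)
    rw [show u + (N1 - u) = N1 by omega] at h4
    exact h4.append' hlastN
  rw [hqs] at Phead P3
  rw [hqt, hqu] at P2
  rw [hqt] at P3
  rw [hqu] at P4
  have BIG := Phead.append' (P2.append' (P3.append' P4))
  have hsum0 : g 0 + (g s - g 0) + ((g u - g t) + ((g t - g s) + ((g N1 - g u) + -(g N1))))
      = (0 : Fin k → ℤ) := by abel
  rw [hsum0] at BIG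
  have hUacc : M.Accepts ((xw 0 ++ mcat 0 s) ++ ((mcat t (u - t)) ++ ((mcat s (t - s)) ++ (mcat u (N1 - u) ++ xwI N1)))) :=
    ⟨f, hf, BIG⟩
  have hU1 : evalF2Word ((xw 0 ++ mcat 0 s) ++ ((mcat t (u - t)) ++ ((mcat s (t - s)) ++ (mcat u (N1 - u) ++ xwI N1)))) = 1 :=
    (hM _).2 hUacc
  have hUval : evalF2Word ((xw 0 ++ mcat 0 s) ++ ((mcat t (u - t)) ++ ((mcat s (t - s)) ++ (mcat u (N1 - u) ++ xwI N1))))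
      = xg s * (xg t)⁻¹ * xg u * (xg s)⁻¹ * xg t * (xg u)⁻¹ := by
    simp only [evalF2Word_append, eval_xw, eval_xwI, eval_mcat]
    rw [show (0 : ℕ) + s = s by omega, show t + (u - t) = u by omega,
      show s + (t - s) = t by omega, show u + (N1 - u) = N1 by omega]
    group
  exact xg_ne s t u hst htu (by rw [← hUval, hU1])
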